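/- Let V_1, V_2, V_3 be pairwise commuting isometries on a complex Hilbert space H, and set S_1 = (V_1 + V_2 + V_3)/3 and S_2 = (V_1V_2 + V_2V_3 + V_3V_1)/3. Then the operator (2I − (2/3)S_1)^* (2I − (2/3)S_1) − (4/9)(S_2 − S_1)^* (S_2 − S_1) is a positive operator on H. -/

import Mathlib

open ContinuousLinearMap

private lemma aux_pos {H : Type*} [NormedAddCommGroup H] [InnerProductSpace ℂ H]
    [CompleteSpace H] (c : ℝ) (hc : 0 ≤ c) (B : H →L[ℂ] H) :
    (((c : ℂ)) • (star B * B)).IsPositive := by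
  rw [isPositive_def']
  constructor
  · rw [IsSelfAdjoint, star_smul, star_mul, star_star, Complex.star_def, Complex.conj_ofReal]
  · intro x
    have h1 : (((c : ℂ)) • (star B * B)) x = (c : ℂ) • (star B (B x)) := rfl
    rw [reApplyInnerSelf, h1, inner_smul_left, Complex.conj_ofReal,
      ContinuousLinearMap.star_eq_adjoint, adjoint_inner_left, inner_self_eq_norm_sq_to_K]
    simp only [RCLike.mul_re, RCLike.ofReal_re, RCLike.ofReal_im, RCLike.inv_re,
      ← RCLike.ofReal_pow, zero_mul, sub_zero, mul_zero, Complex.ofReal_re]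
    positivity

set_option maxHeartbeats 1000000 in
/-- If `V₁, V₂, V₃` are pairwise commuting isometries on a complex Hilbert space,
`S₁ = (V₁+V₂+V₃)/3` and `S₂ = (V₁V₂+V₂V₃+V₃V₁)/3`, then the operator
`(2I − (2/3)S₁)* (2I − (2/3)S₁) − (4/9)(S₂ − S₁)* (S₂ − S₁)` is positive. -/
theorem stmt_7 {H : Type*} [NormedAddCommGroup H] [InnerProductSpace ℂ H] [CompleteSpace H]
    (V₁ V₂ V₃ : H →L[ℂ] H)
    (h12 : V₁ * V₂ = V₂ * V₁) (h13 : V₁ * V₃ = V₃ * V₁) (h23 : V₂ * V₃ = V₃ * V₂)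
    (hV₁ : adjoint V₁ * V₁ = 1) (hV₂ : adjoint V₂ * V₂ = 1) (hV₃ : adjoint V₃ * V₃ = 1)
    (S₁ S₂ : H →L[ℂ] H)
    (hS₁ : S₁ = (3 : ℂ)⁻¹ • (V₁ + V₂ + V₃))
    (hS₂ : S₂ = (3 : ℂ)⁻¹ • (V₁ * V₂ + V₂ * V₃ + V₃ * V₁)) :
    (adjoint ((2 : ℂ) • (1 : H →L[ℂ] H) - ((2 : ℂ)/3) • S₁) *
        ((2 : ℂ) • (1 : H →L[ℂ] H) - ((2 : ℂ)/3) • S₁) -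
      ((4 : ℂ)/9) • (adjoint (S₂ - S₁) * (S₂ - S₁))).IsPositive := by
  subst hS₁ hS₂
  have c1 : star V₁ * V₁ = 1 := by rw [ContinuousLinearMap.star_eq_adjoint]; exact hV₁
  have c2 : star V₂ * V₂ = 1 := by rw [ContinuousLinearMap.star_eq_adjoint]; exact hV₂
  have c3 : star V₃ * V₃ = 1 := by rw [ContinuousLinearMap.star_eq_adjoint]; exact hV₃
  have red : ∀ a x y : H →L[ℂ] H, star a * a = 1 → x * star a * (a * y) = x * y := by
    intro a x y h
    rw [mul_assoc, ← mul_assoc (star a), h, one_mul]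
  have red2 : ∀ a x : H →L[ℂ] H, star a * a = 1 → x * star a * a = x := by
    intro a x h
    rw [mul_assoc, h, mul_one]
  have red3 : ∀ a y : H →L[ℂ] H, star a * a = 1 → star a * (a * y) = y := by
    intro a y h
    rw [← mul_assoc, h, one_mul]
  -- products of double words
  have p11 : star (V₁*V₂) * (V₁*V₂) = 1 := by
    rw [star_mul, red V₁ (star V₂) V₂ c1, c2]
  have p12 : star (V₁*V₂) * (V₂*V₃) = star V₁ * V₃ := by
    rw [h12, star_mul, red V₂ (star V₁) V₃ c2]
  have p13 : star (V₁*V₂) * (V₃*V₁) = star V₂ * V₃ := by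
    rw [star_mul, ← h13, red V₁ (star V₂) V₃ c1]
  have p21 : star (V₂*V₃) * (V₁*V₂) = star V₃ * V₁ := by
    rw [star_mul, h12, red V₂ (star V₃) V₁ c2]
  have p22 : star (V₂*V₃) * (V₂*V₃) = 1 := by
    rw [star_mul, red V₂ (star V₃) V₃ c2, c3]
  have p23 : star (V₂*V₃) * (V₃*V₁) = star V₂ * V₁ := by
    rw [h23, star_mul, red V₃ (star V₂) V₁ c3]
  have p31 : star (V₃*V₁) * (V₁*V₂) = star V₃ * V₂ := by
    rw [← h13, star_mul, red V₁ (star V₃) V₂ c1]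
  have p32 : star (V₃*V₁) * (V₂*V₃) = star V₁ * V₂ := by
    rw [star_mul, h23, red V₃ (star V₁) V₂ c3]
  have p33 : star (V₃*V₁) * (V₃*V₁) = 1 := by
    rw [star_mul, red V₃ (star V₁) V₁ c3, c1]
  -- double * single
  have q11 : star (V₁*V₂) * V₁ = star V₂ := by
    rw [star_mul, red2 V₁ (star V₂) c1]
  have q12 : star (V₁*V₂) * V₂ = star V₁ := by
    rw [h12, star_mul, red2 V₂ (star V₁) c2]
  have q21 : star (V₂*V₃) * V₂ = star V₃ := by
    rw [star_mul, red2 V₂ (star V₃) c2]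
  have q22 : star (V₂*V₃) * V₃ = star V₂ := by
    rw [h23, star_mul, red2 V₃ (star V₂) c3]
  have q31 : star (V₃*V₁) * V₃ = star V₁ := by
    rw [star_mul, red2 V₃ (star V₁) c3]
  have q32 : star (V₃*V₁) * V₁ = star V₃ := by
    rw [← h13, star_mul, red2 V₁ (star V₃) c1]
  -- single star * double
  have r11 : star V₁ * (V₁*V₂) = V₂ := red3 V₁ V₂ c1
  have r12 : star V₂ * (V₁*V₂) = V₁ := by rw [h12]; exact red3 V₂ V₁ c2
  have r21 : star V₂ * (V₂*V₃) = V₃ := red3 V₂ V₃ c2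
  have r22 : star V₃ * (V₂*V₃) = V₂ := by rw [h23]; exact red3 V₃ V₂ c3
  have r31 : star V₃ * (V₃*V₁) = V₁ := red3 V₃ V₁ c3
  have r32 : star V₁ * (V₃*V₁) = V₃ := by rw [← h13]; exact red3 V₁ V₃ c1
  -- the key algebraic identity
  have key :
      adjoint ((2 : ℂ) • (1 : H →L[ℂ] H) -
          ((2 : ℂ)/3) • ((3 : ℂ)⁻¹ • (V₁ + V₂ + V₃))) *
        ((2 : ℂ) • (1 : H →L[ℂ] H) - ((2 : ℂ)/3) • ((3 : ℂ)⁻¹ • (V₁ + V₂ + V₃))) -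
      ((4 : ℂ)/9) • (adjoint ((3 : ℂ)⁻¹ • (V₁ * V₂ + V₂ * V₃ + V₃ * V₁) -
          (3 : ℂ)⁻¹ • (V₁ + V₂ + V₃)) *
        ((3 : ℂ)⁻¹ • (V₁ * V₂ + V₂ * V₃ + V₃ * V₁) - (3 : ℂ)⁻¹ • (V₁ + V₂ + V₃))) =
      (((2/81 : ℝ) : ℂ)) • (star (V₂ - V₃ - V₁*V₂ + V₃*V₁) * (V₂ - V₃ - V₁*V₂ + V₃*V₁)) +
      ((((2/81 : ℝ) : ℂ)) • (star (V₃ - V₁ - V₂*V₃ + V₁*V₂) * (V₃ - V₁ - V₂*V₃ + V₁*V₂)) +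
      ((((2/81 : ℝ) : ℂ)) • (star (V₁ - V₂ - V₃*V₁ + V₂*V₃) * (V₁ - V₂ - V₃*V₁ + V₂*V₃)) +
      ((((8/27 : ℝ) : ℂ)) • (star ((1 : H →L[ℂ] H) - V₁) * ((1 : H →L[ℂ] H) - V₁)) +
      ((((8/27 : ℝ) : ℂ)) • (star ((1 : H →L[ℂ] H) - V₂) * ((1 : H →L[ℂ] H) - V₂)) +
      ((((8/27 : ℝ) : ℂ)) • (star ((1 : H →L[ℂ] H) - V₃) * ((1 : H →L[ℂ] H) - V₃)) +
      (((16/9 : ℝ) : ℂ)) • (star (1 : H →L[ℂ] H) * (1 : H →L[ℂ] H))))))) := by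
    simp only [← ContinuousLinearMap.star_eq_adjoint]
    simp only [star_smul, star_sub, star_add, star_one, smul_sub, smul_add,
      sub_mul, mul_sub, add_mul, mul_add, smul_mul_assoc, mul_smul_comm,
      smul_smul, mul_one, one_mul]
    simp only [c1, c2, c3, p11, p12, p13, p21, p22, p23, p31, p32, p33,
      q11, q12, q21, q22, q31, q32, r11, r12, r21, r22, r31, r32]
    match_scalars <;>
      simp [Complex.ext_iff] <;> norm_num
  rw [key]
  refine IsPositive.add (aux_pos _ (by norm_num) _) (IsPositive.add (aux_pos _ (by norm_num) _)
    (IsPositive.add (aux_pos _ (by norm_num) _) (IsPositive.add (aux_pos _ (by norm_num) _)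
    (IsPositive.add (aux_pos _ (by norm_num) _) (IsPositive.add (aux_pos _ (by norm_num) _)
    (aux_pos _ (by norm_num) _))))))
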